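/- (Uncrossing) The LP maximizing Σ_S γ_S subject to Σ_{S cuts t,t'} γ_S ≤ D(t,t') for all pairs t,t' ∈ T and γ_S ≥ 0, where D is any pseudometric-type bound, has an optimal solution γ* whose support is a laminar family. -/

import Mathlib

open Finset
open scoped Classical

def cutsPair {T : Type*} (S : Finset T) (t t' : T) : Prop :=
  (t ∈ S ∧ t' ∉ S) ∨ (t' ∈ S ∧ t ∉ S)

noncomputable def properSubsets (T : Type*) [Fintype T] : Finset (Finset T) :=
  Finset.univ.filter fun S : Finset T => S.Nonempty ∧ S ≠ Finset.univ

/-- Feasibility for the LP: `γ ≥ 0` is supported on proper nonempty subsets of `T`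
and satisfies `Σ_{S cuts t,t'} γ_S ≤ D(t,t')` for every pair `t,t'`. -/
def LPFeasible {T : Type*} [Fintype T] (D : T → T → ℝ) (γ : Finset T → ℝ) : Prop :=
  (∀ S, 0 ≤ γ S) ∧ (∀ S, γ S ≠ 0 → S.Nonempty ∧ S ≠ Finset.univ) ∧
    ∀ t t', (∑ S ∈ (properSubsets T).filter (fun S => cutsPair S t t'), γ S) ≤ D t t'

/-- (Uncrossing) The LP maximizing `Σ_S γ_S` subject to
`Σ_{S cuts t,t'} γ_S ≤ D(t,t')` and `γ ≥ 0` has an optimal solution whose support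
is a laminar family. -/
theorem lp_optimal_laminar {T : Type} [Fintype T] (D : T → T → ℝ)
    (hD : ∀ t t', 0 ≤ D t t') :
    ∃ γstar : Finset T → ℝ, LPFeasible D γstar ∧
      (∀ S S', γstar S ≠ 0 → γstar S' ≠ 0 → S ⊆ S' ∨ S' ⊆ S ∨ Disjoint S S') ∧
      ∀ γ : Finset T → ℝ, LPFeasible D γ →
        ∑ S ∈ properSubsets T, γ S ≤ ∑ S ∈ properSubsets T, γstar S := by
  classical
  set P : Finset (Finset T) := properSubsets T with hP
  set f : (Finset T → ℝ) → ℝ := fun γ => ∑ S ∈ P, γ S with hf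
  set g : (Finset T → ℝ) → ℝ := fun γ => ∑ S ∈ P, γ S * (S.card : ℝ) with hg
  have fcont : Continuous f := continuous_finset_sum _ fun S _ => continuous_apply S
  have gcont : Continuous g :=
    continuous_finset_sum _ fun S _ => (continuous_apply S).mul continuous_const
  set K : Set (Finset T → ℝ) := {γ | LPFeasible D γ} with hKdef
  have h0K : (0 : Finset T → ℝ) ∈ K := by
    refine ⟨fun S => le_refl 0, fun S h => absurd rfl h, fun t t' => ?_⟩
    simpa using hD t t'
  have hKclosed : IsClosed K := by
    have h1 : IsClosed {γ : Finset T → ℝ | ∀ S, 0 ≤ γ S} := by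
      have : {γ : Finset T → ℝ | ∀ S, 0 ≤ γ S} = ⋂ S, {γ | 0 ≤ γ S} := by
        ext γ; simp [Set.mem_iInter]
      rw [this]
      exact isClosed_iInter fun S => isClosed_le continuous_const (continuous_apply S)
    have h2 : IsClosed {γ : Finset T → ℝ | ∀ S, γ S ≠ 0 → S.Nonempty ∧ S ≠ Finset.univ} := by
      have : {γ : Finset T → ℝ | ∀ S, γ S ≠ 0 → S.Nonempty ∧ S ≠ Finset.univ}
          = ⋂ S ∈ {S : Finset T | ¬(S.Nonempty ∧ S ≠ Finset.univ)},
              {γ : Finset T → ℝ | γ S = 0} := by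
        ext γ
        simp only [Set.mem_setOf_eq, Set.mem_iInter]
        constructor
        · intro h S hS; by_contra hne; exact hS (h S hne)
        · intro h S hne; by_contra hQ; exact hne (h S hQ)
      rw [this]
      exact isClosed_biInter fun S _ => isClosed_eq (continuous_apply S) continuous_const
    have h3 : IsClosed {γ : Finset T → ℝ | ∀ t t',
        (∑ S ∈ (properSubsets T).filter (fun S => cutsPair S t t'), γ S) ≤ D t t'} := by
      have : {γ : Finset T → ℝ | ∀ t t',
          (∑ S ∈ (properSubsets T).filter (fun S => cutsPair S t t'), γ S) ≤ D t t'}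
          = ⋂ t, ⋂ t', {γ : Finset T → ℝ |
          (∑ S ∈ (properSubsets T).filter (fun S => cutsPair S t t'), γ S) ≤ D t t'} := by
        ext γ; simp [Set.mem_iInter]
      rw [this]
      exact isClosed_iInter fun t => isClosed_iInter fun t' =>
        isClosed_le (continuous_finset_sum _ fun S _ => continuous_apply S) continuous_const
    have hKeq : K = {γ : Finset T → ℝ | ∀ S, 0 ≤ γ S} ∩
        ({γ : Finset T → ℝ | ∀ S, γ S ≠ 0 → S.Nonempty ∧ S ≠ Finset.univ} ∩
         {γ : Finset T → ℝ | ∀ t t',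
          (∑ S ∈ (properSubsets T).filter (fun S => cutsPair S t t'), γ S) ≤ D t t'}) := by
      ext γ
      simp only [hKdef, Set.mem_setOf_eq, Set.mem_inter_iff, LPFeasible]
    rw [hKeq]
    exact h1.inter (h2.inter h3)
  have hKbdd : Bornology.IsBounded K := by
    set C : ℝ := ∑ t : T, ∑ t' : T, D t t' with hC
    have hC0 : 0 ≤ C := Finset.sum_nonneg fun t _ => Finset.sum_nonneg fun t' _ => hD t t'
    rw [Metric.isBounded_iff_subset_closedBall 0]
    refine ⟨C, fun γ hγ => ?_⟩
    obtain ⟨hpos, hsupp, hcon⟩ := hγ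
    rw [Metric.mem_closedBall, dist_pi_le_iff hC0]
    intro S
    have hb : γ S ≤ C := by
      by_cases h : γ S = 0
      · rw [h]; exact hC0
      · obtain ⟨⟨t, ht⟩, hne⟩ := hsupp S h
        obtain ⟨t', ht'⟩ : ∃ t', t' ∉ S := by
          by_contra hc
          push_neg at hc
          exact hne (Finset.eq_univ_of_forall hc)
        have hSF : S ∈ (properSubsets T).filter (fun S => cutsPair S t t') := by
          simp only [Finset.mem_filter]
          refine ⟨?_, Or.inl ⟨ht, ht'⟩⟩
          simp [properSubsets, Finset.mem_filter]
          exact ⟨⟨t, ht⟩, hne⟩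
        calc γ S ≤ ∑ X ∈ (properSubsets T).filter (fun S => cutsPair S t t'), γ X :=
              Finset.single_le_sum (fun X _ => hpos X) hSF
          _ ≤ D t t' := hcon t t'
          _ ≤ ∑ t'' : T, D t t'' :=
              Finset.single_le_sum (fun x _ => hD t x) (Finset.mem_univ t')
          _ ≤ C := Finset.single_le_sum
              (fun x _ => Finset.sum_nonneg fun y _ => hD x y) (Finset.mem_univ t)
    have : dist (γ S) ((0 : Finset T → ℝ) S) = |γ S| := by simp [Real.dist_eq]
    rw [this, abs_of_nonneg (hpos S)]
    exact hb
  have hKcomp : IsCompact K := Metric.isCompact_of_isClosed_isBounded hKclosed hKbdd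
  obtain ⟨γ1, hγ1K, hγ1max⟩ := hKcomp.exists_isMaxOn ⟨0, h0K⟩ fcont.continuousOn
  set K2 : Set (Finset T → ℝ) := K ∩ {γ | f γ1 ≤ f γ} with hK2def
  have hK2comp : IsCompact K2 := hKcomp.inter_right (isClosed_le continuous_const fcont)
  obtain ⟨γs, hγsK2, hγsmin⟩ := hK2comp.exists_isMinOn ⟨γ1, hγ1K, le_refl (f γ1)⟩ gcont.continuousOn
  obtain ⟨hγsK, hγsf⟩ := hγsK2
  refine ⟨γs, hγsK, ?_, fun γ hγ => le_trans (hγ1max hγ) hγsf⟩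
  intro S S' hS hS'
  by_contra hcross
  push_neg at hcross
  obtain ⟨hns, hns', hndisj⟩ := hcross
  obtain ⟨hpos, hsupp, hcon⟩ := hγsK
  have hSprop := hsupp S hS
  have hS'prop := hsupp S' hS'
  have hSP : S ∈ P := by simp [hP, properSubsets, Finset.mem_filter, hSprop]
  have hS'P : S' ∈ P := by simp [hP, properSubsets, Finset.mem_filter, hS'prop]
  have hBne : (S \ S').Nonempty := by rwa [Finset.sdiff_nonempty]
  have hCne : (S' \ S).Nonempty := by rwa [Finset.sdiff_nonempty]
  have hAne : (S ∩ S').Nonempty := Finset.not_disjoint_iff_nonempty_inter.mp hndisj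
  set B : Finset T := S \ S' with hB
  set Cs : Finset T := S' \ S with hCs
  have hBprop : B.Nonempty ∧ B ≠ Finset.univ := by
    refine ⟨hBne, fun h => hSprop.2 ?_⟩
    exact Finset.univ_subset_iff.mp (h ▸ Finset.sdiff_subset)
  have hCprop : Cs.Nonempty ∧ Cs ≠ Finset.univ := by
    refine ⟨hCne, fun h => hS'prop.2 ?_⟩
    exact Finset.univ_subset_iff.mp (h ▸ Finset.sdiff_subset)
  have hBP : B ∈ P := by simp [hP, properSubsets, Finset.mem_filter, hBprop]
  have hCP : Cs ∈ P := by simp [hP, properSubsets, Finset.mem_filter, hCprop]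
  -- distinctness
  have hSS' : S ≠ S' := fun h => hns (h ▸ Finset.Subset.refl S)
  have hBS : B ≠ S := by
    intro h
    obtain ⟨x, hx⟩ := hAne
    rw [Finset.mem_inter] at hx
    have : x ∈ B := h ▸ hx.1
    rw [hB, Finset.mem_sdiff] at this
    exact this.2 hx.2
  have hBS' : B ≠ S' := by
    intro h
    obtain ⟨x, hx⟩ := hBne
    have hx' : x ∈ B := hx
    rw [hB, Finset.mem_sdiff] at hx
    exact hx.2 (h ▸ hx')
  have hCS' : Cs ≠ S' := by
    intro h
    obtain ⟨x, hx⟩ := hAne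
    rw [Finset.mem_inter] at hx
    have : x ∈ Cs := h ▸ hx.2
    rw [hCs, Finset.mem_sdiff] at this
    exact this.2 hx.1
  have hCS : Cs ≠ S := by
    intro h
    obtain ⟨x, hx⟩ := hCne
    have hx' : x ∈ Cs := hx
    rw [hCs, Finset.mem_sdiff] at hx
    exact hx.2 (h ▸ hx')
  have hBC : B ≠ Cs := by
    intro h
    obtain ⟨x, hx⟩ := hBne
    have hx' : x ∈ Cs := h ▸ hx
    rw [hB, Finset.mem_sdiff] at hx
    rw [hCs, Finset.mem_sdiff] at hx'
    exact hx'.2 hx.1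
  set ε : ℝ := min (γs S) (γs S') with hε
  have hεS : ε ≤ γs S := min_le_left _ _
  have hεS' : ε ≤ γs S' := min_le_right _ _
  have hε0 : 0 < ε := lt_min ((hpos S).lt_of_ne (Ne.symm hS)) ((hpos S').lt_of_ne (Ne.symm hS'))
  set δ : Finset T → ℝ := fun X => (if X = B then ε else 0) + (if X = Cs then ε else 0)
    - (if X = S then ε else 0) - (if X = S' then ε else 0) with hδ
  set γ' : Finset T → ℝ := fun X => γs X + δ X with hγ'
  have hδB : δ B = ε := by simp [hδ, hBC, hBS, hBS']
  have hδC : δ Cs = ε := by simp [hδ, Ne.symm hBC, hCS, hCS']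
  have hδS : δ S = -ε := by simp [hδ, Ne.symm hBS, Ne.symm hCS, hSS']
  have hδS' : δ S' = -ε := by simp [hδ, Ne.symm hBS', Ne.symm hCS', Ne.symm hSS']
  have hδ0 : ∀ X, X ≠ B → X ≠ Cs → X ≠ S → X ≠ S' → δ X = 0 := by
    intro X h1 h2 h3 h4; simp [hδ, h1, h2, h3, h4]
  -- feasibility of γ'
  have hγ'pos : ∀ X, 0 ≤ γ' X := by
    intro X
    rcases eq_or_ne X S with rfl | h3
    · simp only [hγ', hδS]; linarith
    rcases eq_or_ne X S' with rfl | h4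
    · simp only [hγ', hδS']; linarith
    rcases eq_or_ne X B with rfl | h1
    · simp only [hγ', hδB]; linarith [hpos B]
    rcases eq_or_ne X Cs with rfl | h2
    · simp only [hγ', hδC]; linarith [hpos Cs]
    · simp only [hγ', hδ0 X h1 h2 h3 h4]; linarith [hpos X]
  have hγ'supp : ∀ X, γ' X ≠ 0 → X.Nonempty ∧ X ≠ Finset.univ := by
    intro X hX
    rcases eq_or_ne X S with rfl | h3
    · exact hSprop
    rcases eq_or_ne X S' with rfl | h4
    · exact hS'prop
    rcases eq_or_ne X B with rfl | h1
    · exact hBprop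
    rcases eq_or_ne X Cs with rfl | h2
    · exact hCprop
    · apply hsupp
      intro h0
      apply hX
      simp only [hγ', hδ0 X h1 h2 h3 h4, h0, add_zero]
  have hδsumF : ∀ F : Finset (Finset T), ∑ X ∈ F, δ X =
      (if B ∈ F then ε else 0) + (if Cs ∈ F then ε else 0)
      - (if S ∈ F then ε else 0) - (if S' ∈ F then ε else 0) := by
    intro F
    simp only [hδ, Finset.sum_add_distrib, Finset.sum_sub_distrib, Finset.sum_ite_eq']
  have hγ'con : ∀ t t',
      (∑ X ∈ (properSubsets T).filter (fun X => cutsPair X t t'), γ' X) ≤ D t t' := by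
    intro t t'
    set F : Finset (Finset T) := (properSubsets T).filter (fun X => cutsPair X t t') with hF
    have hsum : ∑ X ∈ F, γ' X = (∑ X ∈ F, γs X) + ∑ X ∈ F, δ X := by
      simp only [hγ']; rw [Finset.sum_add_distrib]
    have hBF : B ∈ F ↔ cutsPair B t t' := by
      rw [hF, Finset.mem_filter]
      constructor
      · exact fun h => h.2
      · intro h; exact ⟨by rwa [← hP], h⟩
    have hCF : Cs ∈ F ↔ cutsPair Cs t t' := by
      rw [hF, Finset.mem_filter]
      exact ⟨fun h => h.2, fun h => ⟨by rwa [← hP], h⟩⟩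
    have hSF : S ∈ F ↔ cutsPair S t t' := by
      rw [hF, Finset.mem_filter]
      exact ⟨fun h => h.2, fun h => ⟨by rwa [← hP], h⟩⟩
    have hS'F : S' ∈ F ↔ cutsPair S' t t' := by
      rw [hF, Finset.mem_filter]
      exact ⟨fun h => h.2, fun h => ⟨by rwa [← hP], h⟩⟩
    have key : ∑ X ∈ F, δ X ≤ 0 := by
      rw [hδsumF F]
      simp only [hBF, hCF, hSF, hS'F]
      by_cases h1 : t ∈ S <;> by_cases h2 : t ∈ S' <;> by_cases h3 : t' ∈ S <;>
        by_cases h4 : t' ∈ S' <;>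
        simp [cutsPair, hB, hCs, Finset.mem_sdiff, h1, h2, h3, h4] <;> linarith
    have := hcon t t'
    rw [← hF] at this
    linarith [hsum, key, this]
  have hγ'feas : LPFeasible D γ' := ⟨hγ'pos, hγ'supp, hγ'con⟩
  -- same objective value
  have hfeq : f γ' = f γs := by
    have : ∑ X ∈ P, δ X = 0 := by
      rw [hδsumF P]
      simp [hBP, hCP, hSP, hS'P]
    simp only [hf, hγ']
    rw [Finset.sum_add_distrib, this, add_zero]
  -- strictly smaller secondary objective
  have hcard : (B.card : ℝ) + Cs.card + 2 * (S ∩ S').card = S.card + S'.card := by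
    have h1 : B.card + (S ∩ S').card = S.card := by
      rw [hB]; exact Finset.card_sdiff_add_card_inter S S'
    have h2 : Cs.card + (S' ∩ S).card = S'.card := by
      rw [hCs]; exact Finset.card_sdiff_add_card_inter S' S
    rw [Finset.inter_comm S' S] at h2
    push_cast [← h1, ← h2]
    ring
  have hA1 : (1 : ℝ) ≤ (S ∩ S').card := by
    have := Finset.card_pos.mpr hAne
    exact_mod_cast this
  have hgeq : g γ' < g γs := by
    have hδg : ∑ X ∈ P, δ X * (X.card : ℝ) =
        ε * B.card + ε * Cs.card - ε * S.card - ε * S'.card := by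
      simp only [hδ, add_mul, sub_mul, Finset.sum_add_distrib, Finset.sum_sub_distrib,
        ite_mul, zero_mul, Finset.sum_ite_eq']
      simp [hBP, hCP, hSP, hS'P]
    have hsplit : g γ' = g γs + ∑ X ∈ P, δ X * (X.card : ℝ) := by
      simp only [hg, hγ', add_mul]
      rw [Finset.sum_add_distrib]
    rw [hsplit, hδg]
    nlinarith [hcard, hA1, hε0]
  have := hγsmin (⟨hγ'feas, by show f γ1 ≤ f γ'; rw [hfeq]; exact hγsf⟩ : γ' ∈ K2)
  simp only [Set.mem_setOf_eq] at this
  linarith [hgeq, this]
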